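/- Let V be a nonatomic measure on an interval (0,m) and k ≥ 1. Define U(x,y) as the maximum of V over unions of at most k subintervals of (x,y). Then x ↦ U(0,x) is continuous and nondecreasing from 0 to U(0,m), and x ↦ U(x,m) is continuous and nonincreasing from U(0,m) to 0; consequently there exists x_A ∈ (0,m) with U(0,x_A) = U(x_A,m). -/

import Mathlib

open MeasureTheory

lemma stmt_17_key (k : ℕ) (hk : 1 ≤ k) (f : ℝ → ℝ) (hf : Integrable f)
    (hfpos : ∀ x, 0 ≤ f x) (x y : ℝ) (hxy : x ≤ y) :
    sSup {s : ℝ | ∃ a b : Fin k → ℝ,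
      (∀ j, x ≤ a j ∧ a j ≤ b j ∧ b j ≤ y) ∧
      Pairwise (Function.onFun Disjoint (fun j => Set.Icc (a j) (b j))) ∧
      s = ∑ j, ∫ t in Set.Icc (a j) (b j), f t} = ∫ t in Set.Icc x y, f t := by
  haveI : NeZero k := ⟨by omega⟩
  set S := {s : ℝ | ∃ a b : Fin k → ℝ,
      (∀ j, x ≤ a j ∧ a j ≤ b j ∧ b j ≤ y) ∧
      Pairwise (Function.onFun Disjoint (fun j => Set.Icc (a j) (b j))) ∧
      s = ∑ j, ∫ t in Set.Icc (a j) (b j), f t} with hS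
  have hBnn : (0:ℝ) ≤ ∫ t in Set.Icc x y, f t :=
    setIntegral_nonneg measurableSet_Icc (fun t _ => hfpos t)
  have hub : ∀ s ∈ S, s ≤ ∫ t in Set.Icc x y, f t := by
    rintro s ⟨a, b, hab, hdisj, rfl⟩
    have heq : ∫ t in ⋃ j ∈ Finset.univ, Set.Icc (a j) (b j), f t
        = ∑ j, ∫ t in Set.Icc (a j) (b j), f t :=
      integral_biUnion_finset Finset.univ (fun i _ => measurableSet_Icc)
        (by rw [Finset.coe_univ]; exact Set.pairwise_univ.mpr hdisj)
        (fun i _ => hf.integrableOn)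
    rw [← heq]
    apply setIntegral_mono_set hf.integrableOn (Filter.Eventually.of_forall hfpos)
    apply Filter.Eventually.of_forall
    intro t ht
    simp only [Set.mem_iUnion, Finset.mem_univ, Set.iUnion_true] at ht
    have ht2 : t ∈ ⋃ j, Set.Icc (a j) (b j) := ht
    obtain ⟨j, htj⟩ := Set.mem_iUnion.mp ht2
    show t ∈ Set.Icc x y
    exact Set.Icc_subset_Icc (hab j).1 (hab j).2.2 htj
  refine le_antisymm (Real.sSup_le hub hBnn) ?_
  rcases eq_or_lt_of_le hxy with rfl | hlt
  · rw [Set.Icc_self, Measure.restrict_eq_zero.mpr Real.volume_singleton, integral_zero_measure]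
    apply Real.sSup_nonneg
    rintro s ⟨a, b, _, _, rfl⟩
    exact Finset.sum_nonneg fun j _ =>
      setIntegral_nonneg measurableSet_Icc (fun t _ => hfpos t)
  · have hbdd : BddAbove S := ⟨_, hub⟩
    have hk0 : (0:ℝ) < k := by exact_mod_cast hk
    have hmem : ∀ δ ∈ Set.Ioo (0:ℝ) (y - x), (∫ t in Set.Icc (x + δ) y, f t) ∈ S := by
      rintro δ ⟨hδ0, hδy⟩
      have pt : ∀ i : Fin k, (x + (i : ℝ) * δ / k) ≤ x + δ := by
        intro i
        have hjk : (i : ℝ) < k := by exact_mod_cast i.isLt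
        have : (i : ℝ) * δ / k ≤ δ := by
          rw [div_le_iff₀ hk0]; nlinarith
        linarith
      have ptlt : ∀ i : Fin k, i ≠ 0 → (x + (i : ℝ) * δ / k) < x + δ := by
        intro i hi
        have hjk : (i : ℝ) < k := by exact_mod_cast i.isLt
        have : (i : ℝ) * δ / k < δ := by
          rw [div_lt_iff₀ hk0]; nlinarith
        linarith
      refine ⟨fun j => if j = 0 then x + δ else x + (j : ℝ) * δ / k,
        fun j => if j = 0 then y else x + (j : ℝ) * δ / k, fun j => ?_, ?_, ?_⟩
      · dsimp only
        by_cases hj : j = 0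
        · rw [if_pos hj, if_pos hj]
          exact ⟨by linarith, by linarith, le_rfl⟩
        · rw [if_neg hj, if_neg hj]
          have h2 : 0 ≤ (j : ℝ) * δ / k := by positivity
          exact ⟨by linarith, le_rfl, by linarith [pt j]⟩
      · intro i j hij
        unfold Function.onFun
        dsimp only
        by_cases hi : i = 0
        · have hj : j ≠ 0 := fun h => hij (by rw [hi, h])
          rw [if_pos hi, if_pos hi, if_neg hj, if_neg hj, Set.Icc_self]
          refine Set.disjoint_singleton_right.mpr ?_
          intro hmem
          exact absurd hmem.1 (not_le.mpr (ptlt j hj))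
        · by_cases hj : j = 0
          · rw [if_pos hj, if_pos hj, if_neg hi, if_neg hi, Set.Icc_self]
            refine Set.disjoint_singleton_left.mpr ?_
            intro hmem
            exact absurd hmem.1 (not_le.mpr (ptlt i hi))
          · rw [if_neg hi, if_neg hi, if_neg hj, if_neg hj, Set.Icc_self, Set.Icc_self]
            refine Set.disjoint_singleton.mpr ?_
            intro h
            have heq : (i : ℝ) * δ / k = (j : ℝ) * δ / k := by linarith [add_left_cancel h]
            have hij' : (i : ℝ) = (j : ℝ) := by
              field_simp at heq
              linarith
            have hn : (i : ℕ) = (j : ℕ) := by exact_mod_cast hij'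
            exact hij (Fin.ext hn)
      · symm
        rw [Fintype.sum_eq_single (0 : Fin k)]
        · simp
        · intro j hj
          simp only [if_neg hj, Set.Icc_self,
            Measure.restrict_eq_zero.mpr Real.volume_singleton, integral_zero_measure]
    have hC : Continuous fun t : ℝ => -∫ s in y..t, f s :=
      (intervalIntegral.continuous_primitive (fun _ _ => hf.intervalIntegrable) y).neg
    have htend : Filter.Tendsto (fun δ : ℝ => -∫ s in y..(x + δ), f s) (nhdsWithin 0 (Set.Ioi 0))
        (nhds (∫ t in Set.Icc x y, f t)) := by
      have h0 : -∫ s in y..(x + 0), f s = ∫ t in Set.Icc x y, f t := by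
        rw [add_zero, ← intervalIntegral.integral_symm, intervalIntegral.integral_of_le hxy,
          integral_Icc_eq_integral_Ioc]
      rw [← h0]
      exact ((hC.comp (continuous_const.add continuous_id)).tendsto 0).mono_left
        nhdsWithin_le_nhds
    have hIoo : Set.Ioo (0:ℝ) (y - x) ∈ nhdsWithin (0:ℝ) (Set.Ioi 0) :=
      Ioo_mem_nhdsGT_of_mem ⟨le_refl 0, by linarith⟩
    have htend' : Filter.Tendsto (fun δ : ℝ => ∫ t in Set.Icc (x + δ) y, f t)
        (nhdsWithin 0 (Set.Ioi 0)) (nhds (∫ t in Set.Icc x y, f t)) := by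
      apply htend.congr'
      filter_upwards [hIoo] with δ hδ
      rw [← intervalIntegral.integral_symm, intervalIntegral.integral_of_le (by linarith [hδ.2]),
        integral_Icc_eq_integral_Ioc]
    refine le_of_tendsto htend' ?_
    filter_upwards [hIoo] with δ hδ
    exact le_csSup hbdd (hmem δ hδ)

/-- Existence of a halving point for the `k`-interval utility (key step of
the two-agent envy-free division). `V` is the nonatomic measure given by
integrating a nonnegative integrable density `f`, and `U x y` is the maximum
value of at most `k` pairwise-disjoint closed subintervals of `[x, y]`.
Then `x ↦ U 0 x` is continuous and nondecreasing from `0`, `x ↦ U x m` is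
continuous and nonincreasing to `0`, and consequently there is a point
`x_A ∈ (0, m)` with `U 0 x_A = U x_A m`. -/
theorem stmt_17 (k : ℕ) (hk : 1 ≤ k) (m : ℝ) (hm : 0 < m)
    (f : ℝ → ℝ) (hf : Integrable f) (hfpos : ∀ x, 0 ≤ f x)
    (V : Set ℝ → ℝ) (hV : ∀ S, V S = ∫ x in S, f x)
    (U : ℝ → ℝ → ℝ)
    (hU : ∀ x y, U x y = sSup {s : ℝ | ∃ a b : Fin k → ℝ,
      (∀ j, x ≤ a j ∧ a j ≤ b j ∧ b j ≤ y) ∧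
      Pairwise (Function.onFun Disjoint (fun j => Set.Icc (a j) (b j))) ∧
      s = ∑ j, V (Set.Icc (a j) (b j))}) :
    ContinuousOn (fun x => U 0 x) (Set.Icc 0 m) ∧
    MonotoneOn (fun x => U 0 x) (Set.Icc 0 m) ∧
    U 0 0 = 0 ∧
    ContinuousOn (fun x => U x m) (Set.Icc 0 m) ∧
    AntitoneOn (fun x => U x m) (Set.Icc 0 m) ∧
    U m m = 0 ∧
    ∃ xA ∈ Set.Ioo 0 m, U 0 xA = U xA m := by
  have hU' : ∀ x y : ℝ, x ≤ y → U x y = ∫ t in Set.Icc x y, f t := by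
    intro x y h
    rw [hU]
    simp only [hV]
    exact stmt_17_key k hk f hf hfpos x y h
  have hsing : ∀ c : ℝ, ∫ t in Set.Icc c c, f t = 0 := by
    intro c
    rw [Set.Icc_self, Measure.restrict_eq_zero.mpr Real.volume_singleton, integral_zero_measure]
  -- interval-integral representations
  have hrep0 : ∀ x ∈ Set.Icc (0:ℝ) m, U 0 x = ∫ t in (0:ℝ)..x, f t := by
    intro x hx
    rw [hU' 0 x hx.1, intervalIntegral.integral_of_le hx.1, integral_Icc_eq_integral_Ioc]
  have hrep1 : ∀ x ∈ Set.Icc (0:ℝ) m, U x m = ∫ t in x..m, f t := by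
    intro x hx
    rw [hU' x m hx.2, intervalIntegral.integral_of_le hx.2, integral_Icc_eq_integral_Ioc]
  have hC0 : Continuous fun x : ℝ => ∫ t in (0:ℝ)..x, f t :=
    intervalIntegral.continuous_primitive (fun _ _ => hf.intervalIntegrable) 0
  have hC1 : Continuous fun x : ℝ => ∫ t in x..m, f t := by
    have h1 : Continuous fun x : ℝ => -∫ t in (m:ℝ)..x, f t :=
      (intervalIntegral.continuous_primitive (fun _ _ => hf.intervalIntegrable) m).neg
    have h2 : (fun x : ℝ => ∫ t in x..m, f t) = fun x : ℝ => -∫ t in (m:ℝ)..x, f t := by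
      funext x; rw [intervalIntegral.integral_symm]
    rw [h2]; exact h1
  have hcont0 : ContinuousOn (fun x => U 0 x) (Set.Icc 0 m) :=
    hC0.continuousOn.congr hrep0
  have hcont1 : ContinuousOn (fun x => U x m) (Set.Icc 0 m) :=
    hC1.continuousOn.congr hrep1
  have hmono : MonotoneOn (fun x => U 0 x) (Set.Icc 0 m) := by
    intro a ha b hb hab
    show U 0 a ≤ U 0 b
    rw [hU' 0 a ha.1, hU' 0 b hb.1]
    exact setIntegral_mono_set hf.integrableOn (Filter.Eventually.of_forall hfpos)
      (Filter.Eventually.of_forall (Set.Icc_subset_Icc_right hab))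
  have hanti : AntitoneOn (fun x => U x m) (Set.Icc 0 m) := by
    intro a ha b hb hab
    show U b m ≤ U a m
    rw [hU' a m ha.2, hU' b m hb.2]
    exact setIntegral_mono_set hf.integrableOn (Filter.Eventually.of_forall hfpos)
      (Filter.Eventually.of_forall (Set.Icc_subset_Icc_left hab))
  have hU00 : U 0 0 = 0 := by rw [hU' 0 0 le_rfl, hsing]
  have hUmm : U m m = 0 := by rw [hU' m m le_rfl, hsing]
  refine ⟨hcont0, hmono, hU00, hcont1, hanti, hUmm, ?_⟩
  set T := ∫ t in Set.Icc (0:ℝ) m, f t with hT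
  have hTnn : 0 ≤ T := setIntegral_nonneg measurableSet_Icc (fun t _ => hfpos t)
  have hU0m : U 0 m = T := hU' 0 m hm.le
  rcases eq_or_lt_of_le hTnn with hT0 | hTpos
  · refine ⟨m / 2, ⟨half_pos hm, half_lt_self hm⟩, ?_⟩
    have h1 : U 0 (m / 2) = 0 := by
      rw [hU' 0 (m / 2) (half_pos hm).le]
      have hle : ∫ t in Set.Icc (0:ℝ) (m / 2), f t ≤ T :=
        setIntegral_mono_set hf.integrableOn (Filter.Eventually.of_forall hfpos)
          (Filter.Eventually.of_forall (Set.Icc_subset_Icc_right (half_lt_self hm).le))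
      have hge : 0 ≤ ∫ t in Set.Icc (0:ℝ) (m / 2), f t :=
        setIntegral_nonneg measurableSet_Icc (fun t _ => hfpos t)
      linarith
    have h2 : U (m / 2) m = 0 := by
      rw [hU' (m / 2) m (half_lt_self hm).le]
      have hle : ∫ t in Set.Icc (m / 2) m, f t ≤ T :=
        setIntegral_mono_set hf.integrableOn (Filter.Eventually.of_forall hfpos)
          (Filter.Eventually.of_forall (Set.Icc_subset_Icc_left (half_pos hm).le))
      have hge : 0 ≤ ∫ t in Set.Icc (m / 2) m, f t :=
        setIntegral_nonneg measurableSet_Icc (fun t _ => hfpos t)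
      linarith
    rw [h1, h2]
  · set g : ℝ → ℝ := fun x => U 0 x - U x m with hg
    have hgc : ContinuousOn g (Set.Icc 0 m) := hcont0.sub hcont1
    have hg0 : g 0 = -T := by simp [hg, hU00, hU' 0 m hm.le, hT]
    have hgm : g m = T := by simp [hg, hUmm, hU' 0 m hm.le, hT]
    have h0mem : (0:ℝ) ∈ Set.Icc (g 0) (g m) := by
      rw [hg0, hgm]
      exact ⟨by linarith, by linarith⟩
    obtain ⟨xA, hxA, hgx⟩ := intermediate_value_Icc hm.le hgc h0mem
    have hne0 : xA ≠ 0 := by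
      intro h
      rw [h, hg0] at hgx
      linarith
    have hnem : xA ≠ m := by
      intro h
      rw [h, hgm] at hgx
      linarith
    refine ⟨xA, ⟨lt_of_le_of_ne hxA.1 (Ne.symm hne0), lt_of_le_of_ne hxA.2 hnem⟩, ?_⟩
    have : U 0 xA - U xA m = 0 := hgx
    linarith
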